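/- Fix n ≥ 1 and let φ_k = −π(n+1)/n + 2πk/n for k = 1, …, n (so φ_1 ≤ φ_2 ≤ … ≤ φ_n). Let θ_1, …, θ_n ∈ [−π, π). Then the minimum over all permutations σ of {1, …, n} and all τ ∈ (−π, π) of ∑_{i=1}^n (1/2)(θ_i − φ_{σ(i)} − τ)² is attained at τ* = (1/n) ∑_{i=1}^n θ_i together with σ equal to the inverse of a permutation sorting θ in ascending order; that is, the minimizing configuration is θ̂*_i = τ* + φ_{σ_sort^{−1}(i)}, where σ_sort satisfies θ_{σ_sort(1)} ≤ θ_{σ_sort(2)} ≤ … ≤ θ_{σ_sort(n)}. -/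

import Mathlib

/-- projecting a configuration of angles θ₁,…,θₙ ∈ [−π,π) onto the set of
optimally dispersed circular configurations { τ + Φ_σ }. The minimum of
Σ_i (1/2)(θ_i − φ_{σ(i)} − τ)² over permutations σ and τ ∈ (−π, π) is attained at
τ* = (Σ_i θ_i)/n and σ the inverse of a sorting permutation of θ. -/
theorem stmt_6 {n : ℕ} (hn : 1 ≤ n)
    (θ : Fin n → ℝ) (hθ : ∀ i, θ i ∈ Set.Ico (-Real.pi) Real.pi)
    (σs : Equiv.Perm (Fin n)) (hsort : Monotone fun i => θ (σs i))
    (φ : Fin n → ℝ)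
    (hφ : ∀ k, φ k = -Real.pi * ((n : ℝ) + 1) / n + 2 * Real.pi * ((k : ℕ) + 1) / n)
    (τs : ℝ) (hτs : τs = (∑ i, θ i) / n) :
    ∀ (σ : Equiv.Perm (Fin n)) (τ : ℝ), -Real.pi < τ → τ < Real.pi →
      ∑ i, (1 / 2 : ℝ) * (θ i - φ (σs⁻¹ i) - τs) ^ 2 ≤
        ∑ i, (1 / 2 : ℝ) * (θ i - φ (σ i) - τ) ^ 2 := by
  intro σ τ _ _
  have hn0 : (n : ℝ) ≠ 0 := Nat.cast_ne_zero.mpr (by omega)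
  -- sum of φ is zero
  have hsum_φ : ∑ k, φ k = 0 := by
    have : ∑ k : Fin n, φ k =
        ∑ k : Fin n, (-Real.pi * ((n : ℝ) + 1) / n + 2 * Real.pi * ((k : ℕ) + 1) / n) :=
      Finset.sum_congr rfl fun k _ => hφ k
    rw [this, Finset.sum_add_distrib, Finset.sum_const, Finset.card_fin]
    have h1 : ∑ k : Fin n, (2 * Real.pi * ((k : ℕ) + 1) / n)
        = 2 * Real.pi / n * ∑ k : Fin n, (((k : ℕ) : ℝ) + 1) := by
      rw [Finset.mul_sum]; exact Finset.sum_congr rfl fun k _ => by ring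
    have h2 : ∑ k : Fin n, (((k : ℕ) : ℝ) + 1) = (n : ℝ) * ((n : ℝ) + 1) / 2 := by
      rw [Finset.sum_add_distrib, Finset.sum_const, Finset.card_fin]
      have hfin : ∑ k : Fin n, ((k : ℕ) : ℝ) = ∑ k ∈ Finset.range n, (k : ℝ) :=
        Fin.sum_univ_eq_sum_range (fun k => (k : ℝ)) n
      have hnat : (∑ i ∈ Finset.range n, i) * 2 = n * (n - 1) := Finset.sum_range_id_mul_two n
      have hreal : (∑ k ∈ Finset.range n, (k : ℝ)) * 2 = (n : ℝ) * ((n : ℝ) - 1) := by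
        have := congrArg (Nat.cast : ℕ → ℝ) hnat
        push_cast [Nat.cast_sub hn] at this
        convert this using 2
      rw [hfin]
      simp only [nsmul_eq_mul, mul_one]
      linarith [hreal]
    rw [h1, h2]
    field_simp
    linear_combination (-Real.pi - Real.pi * (n:ℝ)) * mul_inv_cancel₀ hn0
  -- expansion
  have expand : ∀ (ρ : Equiv.Perm (Fin n)) (t : ℝ),
      ∑ i, (1 / 2 : ℝ) * (θ i - φ (ρ i) - t) ^ 2 =
        (1/2) * ∑ i, (θ i)^2 + (1/2) * ∑ i, (φ i)^2 + (n : ℝ) * t^2 / 2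
          - ∑ i, θ i * φ (ρ i) - t * ∑ i, θ i := by
    intro ρ t
    have h1 : ∑ i, φ (ρ i) = 0 := by rw [Equiv.sum_comp ρ φ]; exact hsum_φ
    have h2 : ∑ i, (φ (ρ i))^2 = ∑ i, (φ i)^2 := Equiv.sum_comp ρ (fun i => (φ i)^2)
    have key : ∀ i, (1 / 2 : ℝ) * (θ i - φ (ρ i) - t) ^ 2 =
        (1/2) * (θ i)^2 + (1/2) * (φ (ρ i))^2 + t^2/2
          - θ i * φ (ρ i) - t * θ i + t * φ (ρ i) := fun i => by ring
    simp_rw [key]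
    rw [Finset.sum_add_distrib, Finset.sum_sub_distrib, Finset.sum_sub_distrib,
      Finset.sum_add_distrib, Finset.sum_add_distrib, ← Finset.mul_sum, ← Finset.mul_sum,
      ← Finset.mul_sum, ← Finset.mul_sum, h1, h2, Finset.sum_const, Finset.card_fin]
    push_cast
    ring
  -- rearrangement
  have hφmono : Monotone φ := by
    intro a b hab
    rw [hφ a, hφ b]
    have : ((a : ℕ) : ℝ) ≤ ((b : ℕ) : ℝ) := by exact_mod_cast hab
    have hπ : (0:ℝ) < Real.pi := Real.pi_pos
    have hnpos : (0:ℝ) < (n:ℝ) := by positivity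
    gcongr
  have hmono : Monovary (fun j => θ (σs j)) φ := hsort.monovary hφmono
  have hre : ∑ i, θ i * φ (σ i) ≤ ∑ i, θ i * φ (σs⁻¹ i) := by
    have hA : ∑ i, θ i * φ (σs⁻¹ i) = ∑ j, θ (σs j) * φ j := by
      rw [← Equiv.sum_comp σs (fun i => θ i * φ (σs⁻¹ i))]
      exact Finset.sum_congr rfl fun j _ => by simp
    have hB : ∑ i, θ i * φ (σ i) = ∑ j, θ (σs j) * φ ((σ * σs) j) := by
      rw [← Equiv.sum_comp σs (fun i => θ i * φ (σ i))]
      rfl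
    rw [hA, hB]
    exact hmono.sum_mul_comp_perm_le_sum_mul (σ := σ * σs)
  -- final
  rw [expand σs⁻¹ τs, expand σ τ]
  have hτ2 : (0:ℝ) ≤ (n : ℝ) / 2 * (τ - τs)^2 := by positivity
  have hS : τs * (n : ℝ) = ∑ i, θ i := by
    rw [hτs]; field_simp
  rw [← hS]
  nlinarith [hτ2, hre]
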